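/- For t ∈ [0,1] define A*(t) := (∫_{[0,1]²} (3.1 + (t+1) sin(2π s₁) + sin(2π s₂))⁻¹ ds₁ ds₂)⁻¹, the reciprocal of the expectation of the reciprocal coefficient (note 3.1 − (t+1) − 1 ≥ 0.1 > 0 on [0,1], so all reciprocals are well defined). Then for every ω = (ω₁, ω₂) ∈ [0,1]² and every x ∈ [0,1], lim_{ε→0⁺} ∫₀ˣ (3.1 + (t+1) sin(2π(ω₁ + t/ε)) + sin(2π(ω₂ + √2·t/ε)))⁻¹ dt = ∫₀ˣ (1/A*(t)) dt. In particular, the reciprocals of the random multiscale coefficient A^ε(x, ω) = 3.1 + (x+1) sin(2π(ω₁ + x/ε)) + sin(2π(ω₂ + √2 x/ε)) converge weakly to 1/A*, independently of the realization ω; i.e., the G-limit of this ergodic random coefficient is the deterministic function A*(x) = 1/E[1/A(x,·)]. -/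

import Mathlib

open MeasureTheory Set Filter intervalIntegral

noncomputable section
namespace Stmt16

/-- `ec θ = exp(2πiθ)`. -/
def ec (θ : ℝ) : ℂ := Complex.exp (2 * Real.pi * θ * Complex.I)

lemma ec_add (θ θ' : ℝ) : ec (θ + θ') = ec θ * ec θ' := by
  rw [ec, ec, ec, ← Complex.exp_add]; push_cast; ring_nf

lemma ec_zero : ec 0 = 1 := by simp [ec]

lemma ec_neg_mul (θ : ℝ) : ec θ * ec (-θ) = 1 := by
  rw [← ec_add]; simp [ec_zero]

lemma norm_ec (θ : ℝ) : ‖ec θ‖ = 1 := by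
  rw [ec]
  have : (2 * Real.pi * θ : ℂ) * Complex.I = ((2 * Real.pi * θ : ℝ) : ℂ) * Complex.I := by
    push_cast; ring
  rw [this, Complex.norm_exp_ofReal_mul_I]

lemma ec_sum {ι : Type*} (s : Finset ι) (φ : ι → ℝ) :
    (∏ i ∈ s, ec (φ i)) = ec (∑ i ∈ s, φ i) := by
  classical
  induction s using Finset.induction with
  | empty => simp [ec_zero]
  | insert _ _ h ih => rw [Finset.prod_insert h, Finset.sum_insert h, ec_add, ih]

lemma ec_int (n : ℤ) : ec n = 1 := by
  rw [ec]
  have : (2 * Real.pi * (n : ℝ) : ℂ) * Complex.I = (n : ℂ) * (2 * Real.pi * Complex.I) := by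
    push_cast; ring
  rw [this, Complex.exp_int_mul_two_pi_mul_I]

lemma continuous_ec : Continuous ec := by
  apply Complex.continuous_exp.comp; continuity

lemma hasDerivAt_ec (c t : ℝ) :
    HasDerivAt (fun t : ℝ => ec (c * t)) (2 * Real.pi * c * Complex.I * ec (c * t)) t := by
  have key : ∀ s : ℝ, ec (c * s) = Complex.exp ((2 * Real.pi * c * Complex.I) * s) := by
    intro s; rw [ec]; push_cast; ring_nf
  have h1 : HasDerivAt (fun z : ℂ => Complex.exp ((2 * Real.pi * c * Complex.I) * z))
      ((2 * Real.pi * c * Complex.I) * Complex.exp ((2 * Real.pi * c * Complex.I) * t)) (t : ℂ) := by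
    simpa [mul_comm, Function.comp_def] using ((Complex.hasDerivAt_exp _).comp (t : ℂ)
      ((hasDerivAt_id (t : ℂ)).const_mul (2 * Real.pi * c * Complex.I)))
  have := h1.comp_ofReal
  simpa [key] using this

/-- sin(2πθ) expressed through `ec`. -/
lemma sin_eq_ec (θ : ℝ) :
    ((Real.sin (2 * Real.pi * θ) : ℝ) : ℂ) = ec θ * (-Complex.I / 2) + ec (-θ) * (Complex.I / 2) := by
  rw [Complex.ofReal_sin, Complex.sin]
  rw [ec, ec]
  push_cast
  ring_nf

lemma pair (θ u : ℝ) : ((Real.sin (2 * Real.pi * (θ + u)) : ℝ) : ℂ)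
    = ec θ * (-Complex.I/2) * ec u + ec (-θ) * (Complex.I/2) * ec (-u) := by
  rw [sin_eq_ec (θ + u), neg_add, ec_add, ec_add]; ring

def bb : Fin 4 → ℂ := ![-Complex.I/2, Complex.I/2, -Complex.I/2, Complex.I/2]
def dd : Fin 4 → ℕ := ![1, 1, 0, 0]
def jj : Fin 4 → ℤ := ![1, -1, 0, 0]
def ll : Fin 4 → ℤ := ![0, 0, 1, -1]
def aa (ω₁ ω₂ : ℝ) (w : Fin 4) : ℂ := ec (jj w * ω₁ + ll w * ω₂) * bb w

/-- frequency of wave `w` -/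
def fr (w : Fin 4) : ℝ := (jj w : ℝ) + Real.sqrt 2 * (ll w : ℝ)

lemma claimA (ω₁ ω₂ t u : ℝ) :
    (((t + 1) * Real.sin (2 * Real.pi * (ω₁ + u)) + Real.sin (2 * Real.pi * (ω₂ + Real.sqrt 2 * u)) : ℝ) : ℂ)
    = ∑ w : Fin 4, aa ω₁ ω₂ w * ((t:ℂ)+1)^(dd w) * ec (fr w * u) := by
  rw [Fin.sum_univ_four]
  rw [Complex.ofReal_add, Complex.ofReal_mul, Complex.ofReal_add, Complex.ofReal_one]
  rw [pair ω₁ u, pair ω₂ (Real.sqrt 2 * u)]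
  simp only [aa, bb, dd, jj, ll, fr, Matrix.cons_val_zero, Matrix.cons_val_one, Matrix.head_cons,
    Matrix.cons_val_two, Matrix.tail_cons, Matrix.cons_val_three]
  push_cast
  norm_num
  ring
lemma continuous_ec_lin (c : ℝ) : Continuous (fun t : ℝ => ec (c * t)) :=
  continuous_ec.comp (continuous_const.mul continuous_id)

lemma intgr (k : ℕ) (c : ℝ) (a b : ℝ) :
    IntervalIntegrable (fun t : ℝ => ((t : ℂ) + 1) ^ k * ec (c * t)) volume a b :=
  (((Complex.continuous_ofReal.add continuous_const).pow k).mul (continuous_ec_lin c)).intervalIntegrable a b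

lemma integral_ec_int {n : ℤ} (hn : n ≠ 0) : (∫ s in (0:ℝ)..1, ec (n * s)) = 0 := by
  have hb : (2 * (Real.pi:ℂ) * (n : ℂ) * Complex.I) ≠ 0 := by
    simp [Real.pi_ne_zero, Complex.I_ne_zero, hn]
  have hd : ∀ s ∈ uIcc (0:ℝ) 1, HasDerivAt (fun s : ℝ => ec (n * s) / (2 * (Real.pi:ℂ) * (n:ℂ) * Complex.I))
      (ec (n * s)) s := by
    intro s _
    have h := (hasDerivAt_ec n s).div_const (2 * (Real.pi:ℂ) * (n:ℂ) * Complex.I)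
    refine h.congr_deriv ?_
    push_cast
    rw [mul_div_cancel_left₀ _ hb]
  have := integral_eq_sub_of_hasDerivAt hd
    (((continuous_ec_lin (n:ℝ)).intervalIntegrable 0 1))
  rw [this]
  have h1 : ec ((n:ℝ) * 1) = 1 := by simpa using ec_int n
  have h0 : ec ((n:ℝ) * 0) = 1 := by simpa using ec_zero
  rw [h1, h0]; ring
lemma hasDerivAt_poly (k : ℕ) (t : ℝ) :
    HasDerivAt (fun t : ℝ => ((t:ℂ)+1)^k) ((k:ℂ) * ((t:ℂ)+1)^(k-1)) t := by
  have h : HasDerivAt (fun z : ℂ => (z+1)^k) ((k:ℂ) * ((t:ℂ)+1)^(k-1)) (t:ℂ) := by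
    simpa using ((hasDerivAt_id (t:ℂ)).add_const 1).fun_pow k
  exact h.comp_ofReal

lemma norm_poly_le {k : ℕ} {t : ℝ} (h0 : 0 ≤ t) (h1 : t ≤ 1) :
    ‖((t:ℂ)+1)^k‖ ≤ 2^k := by
  rw [norm_pow]
  apply pow_le_pow_left₀ (norm_nonneg _)
  have : ((t:ℂ)+1) = ((t+1 : ℝ) : ℂ) := by push_cast; ring
  rw [this, Complex.norm_real]
  rw [Real.norm_eq_abs, abs_of_nonneg (by linarith)]
  linarith

lemma osc_bound (k : ℕ) {c : ℝ} (hc : c ≠ 0) {x : ℝ} (hx : x ∈ Icc (0:ℝ) 1) :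
    ‖∫ t in (0:ℝ)..x, ((t : ℂ) + 1) ^ k * ec (c * t)‖
      ≤ (2 ^ k + 1 + k * 2 ^ k) / (2 * Real.pi * |c|) := by
  obtain ⟨hx0, hx1⟩ := hx
  have hb : (2 * (Real.pi:ℂ) * (c:ℂ) * Complex.I) ≠ 0 := by
    simp [Real.pi_ne_zero, Complex.I_ne_zero, hc]
  have hnb : ‖(2 * (Real.pi:ℂ) * (c:ℂ) * Complex.I)‖ = 2 * Real.pi * |c| := by
    simp [norm_mul, Complex.norm_real, abs_of_pos Real.pi_pos]
  have hnbpos : 0 < 2 * Real.pi * |c| := by positivity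
  have hd : ∀ t ∈ uIcc (0:ℝ) x,
      HasDerivAt (fun t : ℝ => ((t:ℂ)+1)^k * ec (c * t) / (2 * (Real.pi:ℂ) * (c:ℂ) * Complex.I))
      (((t:ℂ)+1)^k * ec (c*t)
        + ((k : ℂ) * ((t:ℂ)+1)^(k-1) / (2 * (Real.pi:ℂ) * (c:ℂ) * Complex.I)) * ec (c*t)) t := by
    intro t _
    have h := ((hasDerivAt_poly k t).mul (hasDerivAt_ec c t)).div_const
      (2 * (Real.pi:ℂ) * (c:ℂ) * Complex.I)
    refine h.congr_deriv ?_
    push_cast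
    have hc' : (c:ℂ) ≠ 0 := by exact_mod_cast hc
    field_simp
    ring
  have hint2 : IntervalIntegrable
      (fun t : ℝ => ((k : ℂ) * ((t:ℂ)+1)^(k-1) / (2 * (Real.pi:ℂ) * (c:ℂ) * Complex.I)) * ec (c*t))
      volume 0 x := by
    apply Continuous.intervalIntegrable
    exact (continuous_const.mul ((Complex.continuous_ofReal.add continuous_const).pow _)
      |>.div_const _).mul (continuous_ec_lin c)
  have key := integral_eq_sub_of_hasDerivAt hd ((intgr k c 0 x).add hint2)
  rw [integral_add (intgr k c 0 x) hint2] at key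
  have hmain : (∫ t in (0:ℝ)..x, ((t:ℂ)+1)^k * ec (c*t))
      = ((x:ℂ)+1)^k * ec (c*x) / (2 * (Real.pi:ℂ) * (c:ℂ) * Complex.I)
        - ((0:ℂ)+1)^k * ec (c*0) / (2 * (Real.pi:ℂ) * (c:ℂ) * Complex.I)
        - ∫ t in (0:ℝ)..x, ((k : ℂ) * ((t:ℂ)+1)^(k-1) / (2 * (Real.pi:ℂ) * (c:ℂ) * Complex.I)) * ec (c*t) := by
    push_cast at key ⊢
    linear_combination key
  rw [hmain]
  have e1 : ‖((x:ℂ)+1)^k * ec (c*x) / (2 * (Real.pi:ℂ) * (c:ℂ) * Complex.I)‖ ≤ 2^k / (2*Real.pi*|c|) := by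
    rw [norm_div, norm_mul, hnb, norm_ec, mul_one]
    gcongr
    exact norm_poly_le hx0 hx1
  have e0 : ‖((0:ℂ)+1)^k * ec (c*0) / (2 * (Real.pi:ℂ) * (c:ℂ) * Complex.I)‖ ≤ 1 / (2*Real.pi*|c|) := by
    rw [norm_div, norm_mul, hnb, norm_ec, mul_one]
    simp
  have e2 : ‖∫ t in (0:ℝ)..x, ((k : ℂ) * ((t:ℂ)+1)^(k-1) / (2 * (Real.pi:ℂ) * (c:ℂ) * Complex.I)) * ec (c*t)‖
      ≤ (k * 2^k) / (2*Real.pi*|c|) := by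
    have hb1 : ∀ t ∈ Set.uIoc (0:ℝ) x,
        ‖((k : ℂ) * ((t:ℂ)+1)^(k-1) / (2 * (Real.pi:ℂ) * (c:ℂ) * Complex.I)) * ec (c*t)‖
          ≤ (k * 2^k) / (2*Real.pi*|c|) := by
      intro t ht
      rw [uIoc_of_le hx0] at ht
      rw [norm_mul, norm_ec, mul_one, norm_div, norm_mul, hnb]
      gcongr
      · simp
      · calc ‖((t:ℂ)+1)^(k-1)‖ ≤ 2^(k-1) := norm_poly_le (le_of_lt ht.1) (ht.2.trans hx1)
          _ ≤ 2^k := pow_le_pow_right₀ (by norm_num) (Nat.sub_le k 1)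
    have := intervalIntegral.norm_integral_le_of_norm_le_const hb1
    calc ‖_‖ ≤ (k * 2^k) / (2*Real.pi*|c|) * |x - 0| := this
      _ ≤ (k * 2^k) / (2*Real.pi*|c|) * 1 := by
          apply mul_le_mul_of_nonneg_left _ (by positivity)
          rw [sub_zero, abs_of_nonneg hx0]; exact hx1
      _ = (k * 2^k) / (2*Real.pi*|c|) := mul_one _
  calc ‖_‖ ≤ ‖((x:ℂ)+1)^k * ec (c*x) / (2 * (Real.pi:ℂ) * (c:ℂ) * Complex.I)
        - ((0:ℂ)+1)^k * ec (c*0) / (2 * (Real.pi:ℂ) * (c:ℂ) * Complex.I)‖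
        + ‖∫ t in (0:ℝ)..x, ((k : ℂ) * ((t:ℂ)+1)^(k-1) / (2 * (Real.pi:ℂ) * (c:ℂ) * Complex.I)) * ec (c*t)‖ :=
        norm_sub_le _ _
    _ ≤ (‖((x:ℂ)+1)^k * ec (c*x) / (2 * (Real.pi:ℂ) * (c:ℂ) * Complex.I)‖
        + ‖((0:ℂ)+1)^k * ec (c*0) / (2 * (Real.pi:ℂ) * (c:ℂ) * Complex.I)‖)
        + ‖∫ t in (0:ℝ)..x, ((k : ℂ) * ((t:ℂ)+1)^(k-1) / (2 * (Real.pi:ℂ) * (c:ℂ) * Complex.I)) * ec (c*t)‖ := by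
        gcongr; exact norm_sub_le _ _
    _ ≤ (2^k / (2*Real.pi*|c|) + 1 / (2*Real.pi*|c|)) + (k * 2^k) / (2*Real.pi*|c|) := by
        gcongr
    _ = (2 ^ k + 1 + k * 2 ^ k) / (2 * Real.pi * |c|) := by ring
lemma claimA' (t s₁ s₂ : ℝ) :
    (((t + 1) * Real.sin (2 * Real.pi * s₁) + Real.sin (2 * Real.pi * s₂) : ℝ) : ℂ)
    = ∑ w : Fin 4, bb w * ((t:ℂ)+1)^(dd w) * (ec (jj w * s₁) * ec (ll w * s₂)) := by
  rw [Fin.sum_univ_four]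
  rw [Complex.ofReal_add, Complex.ofReal_mul, Complex.ofReal_add, Complex.ofReal_one]
  rw [sin_eq_ec s₁, sin_eq_ec s₂]
  simp only [bb, dd, jj, ll, Matrix.cons_val_zero, Matrix.cons_val_one, Matrix.head_cons,
    Matrix.cons_val_two, Matrix.tail_cons, Matrix.cons_val_three]
  push_cast
  norm_num [ec_zero]
  ring

variable {n : ℕ}
def KK (p : Fin n → Fin 4) : ℕ := ∑ i, dd (p i)
def JJ (p : Fin n → Fin 4) : ℤ := ∑ i, jj (p i)
def LL (p : Fin n → Fin 4) : ℤ := ∑ i, ll (p i)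
def FF (p : Fin n → Fin 4) : ℝ := (JJ p : ℝ) + Real.sqrt 2 * (LL p : ℝ)
lemma FF_eq_zero_iff (p : Fin n → Fin 4) : FF p = 0 ↔ JJ p = 0 ∧ LL p = 0 := by
  constructor
  · intro h
    by_cases hL : LL p = 0
    · have h' : (JJ p : ℝ) = 0 := by
        rw [FF, hL] at h; push_cast at h; linarith
      exact ⟨by exact_mod_cast h', hL⟩
    · exfalso
      apply irrational_sqrt_two
      refine ⟨(-(JJ p : ℚ)) / (LL p : ℚ), ?_⟩
      have hL' : ((LL p : ℝ)) ≠ 0 := Int.cast_ne_zero.mpr hL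
      rw [FF] at h
      push_cast
      field_simp
      linarith
  · rintro ⟨h1, h2⟩
    rw [FF, h1, h2]; simp

lemma prod_aa (ω₁ ω₂ : ℝ) (p : Fin n → Fin 4) :
    (∏ i, aa ω₁ ω₂ (p i)) = ec ((JJ p : ℝ) * ω₁ + (LL p : ℝ) * ω₂) * ∏ i, bb (p i) := by
  simp only [aa]
  rw [Finset.prod_mul_distrib, ec_sum]
  congr 2
  rw [JJ, LL]
  push_cast
  rw [Finset.sum_add_distrib, ← Finset.sum_mul, ← Finset.sum_mul]

/-- expansion of the n-th power, oscillatory side -/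
lemma powA (ω₁ ω₂ : ℝ) (t u : ℝ) :
    ((((t + 1) * Real.sin (2 * Real.pi * (ω₁ + u)) + Real.sin (2 * Real.pi * (ω₂ + Real.sqrt 2 * u)) : ℝ) : ℂ))^n
    = ∑ p : Fin n → Fin 4, (∏ i, aa ω₁ ω₂ (p i)) * (((t:ℂ)+1)^(KK p) * ec (FF p * u)) := by
  rw [claimA]
  rw [show (∑ w : Fin 4, aa ω₁ ω₂ w * ((t:ℂ)+1)^(dd w) * ec (fr w * u))^n
      = ∏ _i : Fin n, ∑ w : Fin 4, aa ω₁ ω₂ w * ((t:ℂ)+1)^(dd w) * ec (fr w * u) by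
    simp [Finset.prod_const]]
  rw [Finset.prod_univ_sum]
  rw [Fintype.piFinset_univ]
  apply Finset.sum_congr rfl
  intro p _
  rw [show ∀ f : Fin n → ℂ, ∏ i, f i = ∏ i, f i from fun _ => rfl]
  calc (∏ i, aa ω₁ ω₂ (p i) * ((t:ℂ)+1)^(dd (p i)) * ec (fr (p i) * u))
      = (∏ i, aa ω₁ ω₂ (p i)) * (∏ i, ((t:ℂ)+1)^(dd (p i))) * (∏ i, ec (fr (p i) * u)) := by
        rw [Finset.prod_mul_distrib, Finset.prod_mul_distrib]
    _ = (∏ i, aa ω₁ ω₂ (p i)) * (((t:ℂ)+1)^(KK p) * ec (FF p * u)) := by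
        rw [Finset.prod_pow_eq_pow_sum, ec_sum, ← Finset.sum_mul]
        rw [show (∑ i, fr (p i)) = FF p by
          simp only [fr, FF, JJ, LL]
          rw [Finset.sum_add_distrib]
          push_cast
          rw [← Finset.mul_sum]]
        ring_nf
        rfl

/-- expansion of the n-th power, mean side -/
lemma powA' (t s₁ s₂ : ℝ) :
    ((((t + 1) * Real.sin (2 * Real.pi * s₁) + Real.sin (2 * Real.pi * s₂) : ℝ) : ℂ))^n
    = ∑ p : Fin n → Fin 4, (∏ i, bb (p i)) * (((t:ℂ)+1)^(KK p) * (ec ((JJ p : ℝ) * s₁) * ec ((LL p : ℝ) * s₂))) := by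
  rw [claimA']
  rw [show (∑ w : Fin 4, bb w * ((t:ℂ)+1)^(dd w) * (ec (jj w * s₁) * ec (ll w * s₂)))^n
      = ∏ _i : Fin n, ∑ w : Fin 4, bb w * ((t:ℂ)+1)^(dd w) * (ec (jj w * s₁) * ec (ll w * s₂)) by
    simp [Finset.prod_const]]
  rw [Finset.prod_univ_sum, Fintype.piFinset_univ]
  apply Finset.sum_congr rfl
  intro p _
  calc (∏ i, bb (p i) * ((t:ℂ)+1)^(dd (p i)) * (ec (jj (p i) * s₁) * ec (ll (p i) * s₂)))
      = (∏ i, bb (p i)) * (∏ i, ((t:ℂ)+1)^(dd (p i)))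
        * ((∏ i, ec (jj (p i) * s₁)) * (∏ i, ec (ll (p i) * s₂))) := by
        rw [Finset.prod_mul_distrib, Finset.prod_mul_distrib, Finset.prod_mul_distrib]
    _ = (∏ i, bb (p i)) * (((t:ℂ)+1)^(KK p) * (ec ((JJ p : ℝ) * s₁) * ec ((LL p : ℝ) * s₂))) := by
        rw [Finset.prod_pow_eq_pow_sum, ec_sum, ec_sum, ← Finset.sum_mul, ← Finset.sum_mul]
        rw [show (∑ i, (jj (p i) : ℝ)) = (JJ p : ℝ) by rw [JJ]; push_cast; ring]
        rw [show (∑ i, (ll (p i) : ℝ)) = (LL p : ℝ) by rw [LL]; push_cast; ring]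
        ring_nf
        rfl
lemma integral_ec_ite (m : ℤ) :
    (∫ s in (0:ℝ)..1, ec (m * s)) = if m = 0 then 1 else 0 := by
  by_cases h : m = 0
  · simp [h, ec_zero]
  · simp [h, integral_ec_int h]

lemma powA_div (ω₁ ω₂ : ℝ) (t ε : ℝ) :
    ((((t + 1) * Real.sin (2 * Real.pi * (ω₁ + t / ε))
        + Real.sin (2 * Real.pi * (ω₂ + Real.sqrt 2 * t / ε)) : ℝ) : ℂ))^n
    = ∑ p : Fin n → Fin 4, (∏ i, aa ω₁ ω₂ (p i)) * (((t:ℂ)+1)^(KK p) * ec ((FF p / ε) * t)) := by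
  rw [show (2 * Real.pi * (ω₂ + Real.sqrt 2 * t / ε)) = 2 * Real.pi * (ω₂ + Real.sqrt 2 * (t/ε)) by ring]
  rw [powA ω₁ ω₂ t (t/ε)]
  exact Finset.sum_congr rfl fun p _ => by rw [show FF p * (t/ε) = FF p / ε * t by ring]

lemma osc_expand (ω₁ ω₂ x ε : ℝ) :
    (∫ t in (0:ℝ)..x, ((((t + 1) * Real.sin (2 * Real.pi * (ω₁ + t / ε))
        + Real.sin (2 * Real.pi * (ω₂ + Real.sqrt 2 * t / ε)) : ℝ) : ℂ))^n)
    = ∑ p : Fin n → Fin 4, (∏ i, aa ω₁ ω₂ (p i))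
        * ∫ t in (0:ℝ)..x, ((t:ℂ)+1)^(KK p) * ec ((FF p / ε) * t) := by
  simp only [powA_div]
  rw [intervalIntegral.integral_finset_sum]
  · exact Finset.sum_congr rfl fun p _ => by
      rw [← intervalIntegral.integral_const_mul]
  · intro p _
    exact (continuous_const.mul
      (((Complex.continuous_ofReal.add continuous_const).pow _).mul (continuous_ec_lin _))).intervalIntegrable 0 x

lemma mean_inner (t : ℝ) :
    (∫ s₁ in (0:ℝ)..1, ∫ s₂ in (0:ℝ)..1,
      ((((t + 1) * Real.sin (2 * Real.pi * s₁) + Real.sin (2 * Real.pi * s₂) : ℝ) : ℂ))^n)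
    = ∑ p : Fin n → Fin 4,
        if JJ p = 0 ∧ LL p = 0 then (∏ i, bb (p i)) * ((t:ℂ)+1)^(KK p) else 0 := by
  have inner : ∀ s₁ : ℝ,
      (∫ s₂ in (0:ℝ)..1,
        ((((t + 1) * Real.sin (2 * Real.pi * s₁) + Real.sin (2 * Real.pi * s₂) : ℝ) : ℂ))^n)
      = ∑ p : Fin n → Fin 4, ((∏ i, bb (p i)) * (((t:ℂ)+1)^(KK p) * ec ((JJ p : ℝ) * s₁)))
          * (if LL p = 0 then 1 else 0) := by
    intro s₁
    simp only [powA']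
    rw [intervalIntegral.integral_finset_sum (fun p _ => by
      apply Continuous.intervalIntegrable
      exact (continuous_const.mul (continuous_const.mul (continuous_const.mul
        (continuous_ec_lin _)))))]
    refine Finset.sum_congr rfl fun p _ => ?_
    have : ∀ s₂ : ℝ, (∏ i, bb (p i)) * (((t:ℂ)+1)^(KK p) * (ec ((JJ p : ℝ) * s₁) * ec ((LL p : ℝ) * s₂)))
        = ((∏ i, bb (p i)) * (((t:ℂ)+1)^(KK p) * ec ((JJ p : ℝ) * s₁))) * ec ((LL p : ℝ) * s₂) := by
      intro s₂; ring
    simp only [this]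
    rw [intervalIntegral.integral_const_mul, integral_ec_ite]
  simp only [inner]
  rw [intervalIntegral.integral_finset_sum (fun p _ => by
    apply Continuous.intervalIntegrable
    exact ((continuous_const.mul (continuous_const.mul (continuous_ec_lin _))).mul continuous_const))]
  refine Finset.sum_congr rfl fun p _ => ?_
  have : ∀ s₁ : ℝ, ((∏ i, bb (p i)) * (((t:ℂ)+1)^(KK p) * ec ((JJ p : ℝ) * s₁)))
        * (if LL p = 0 then 1 else 0)
      = ((∏ i, bb (p i)) * ((t:ℂ)+1)^(KK p) * (if LL p = 0 then (1:ℂ) else 0)) * ec ((JJ p : ℝ) * s₁) := by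
    intro s₁; ring
  simp only [this]
  rw [intervalIntegral.integral_const_mul, integral_ec_ite]
  by_cases h1 : JJ p = 0 <;> by_cases h2 : LL p = 0 <;> simp [h1, h2]

lemma mean_t (x t₀ : ℝ) :
    (∫ t in (0:ℝ)..x, ∫ s₁ in (0:ℝ)..1, ∫ s₂ in (0:ℝ)..1,
      ((((t + 1) * Real.sin (2 * Real.pi * s₁) + Real.sin (2 * Real.pi * s₂) : ℝ) : ℂ))^n)
    = ∑ p : Fin n → Fin 4,
        if JJ p = 0 ∧ LL p = 0 then (∏ i, bb (p i)) * ∫ t in (0:ℝ)..x, ((t:ℂ)+1)^(KK p) else 0 := by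
  simp only [mean_inner]
  rw [intervalIntegral.integral_finset_sum (fun p _ => by
    by_cases h : JJ p = 0 ∧ LL p = 0 <;>
      simp [h] <;>
      exact (continuous_const.mul ((Complex.continuous_ofReal.add continuous_const).pow _)).intervalIntegrable 0 x)]
  refine Finset.sum_congr rfl fun p _ => ?_
  by_cases h : JJ p = 0 ∧ LL p = 0
  · simp only [if_pos h]
    rw [intervalIntegral.integral_const_mul]
  · simp [h]

/-- The key limit: the `n`-th moment of the oscillating coefficient converges to the
mean `n`-th moment. -/
lemma main_n (ω₁ ω₂ x : ℝ) (hx : x ∈ Icc (0:ℝ) 1) (n : ℕ) :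
    Tendsto (fun ε : ℝ => ∫ t in (0:ℝ)..x,
        ((((t + 1) * Real.sin (2 * Real.pi * (ω₁ + t / ε))
          + Real.sin (2 * Real.pi * (ω₂ + Real.sqrt 2 * t / ε)) : ℝ) : ℂ))^n)
      (nhdsWithin 0 (Ioi 0))
      (nhds (∫ t in (0:ℝ)..x, ∫ s₁ in (0:ℝ)..1, ∫ s₂ in (0:ℝ)..1,
        ((((t + 1) * Real.sin (2 * Real.pi * s₁) + Real.sin (2 * Real.pi * s₂) : ℝ) : ℂ))^n)) := by
  rw [mean_t x 0]
  simp only [osc_expand (n := n) ω₁ ω₂ x]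
  apply tendsto_finset_sum
  intro p _
  by_cases h : JJ p = 0 ∧ LL p = 0
  · -- non-oscillating tuple: constant in ε
    have hF : FF p = 0 := (FF_eq_zero_iff p).mpr h
    have haa : (∏ i, aa ω₁ ω₂ (p i)) = ∏ i, bb (p i) := by
      rw [prod_aa, h.1, h.2]
      simp [ec_zero]
    simp only [hF, h, if_true, zero_div, zero_mul, ec_zero, mul_one, haa]
    exact tendsto_const_nhds
  · -- oscillating tuple: tends to zero
    have hF : FF p ≠ 0 := fun hc => h ((FF_eq_zero_iff p).mp hc)
    simp only [h, if_false]
    rw [show (0:ℂ) = (∏ i, aa ω₁ ω₂ (p i)) * 0 by ring]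
    apply Tendsto.const_mul
    apply squeeze_zero_norm' (a := fun ε : ℝ => (2 ^ (KK p) + 1 + (KK p) * 2 ^ (KK p)) / (2 * Real.pi * |FF p|) * ε)
    · filter_upwards [self_mem_nhdsWithin] with ε (hε : ε ∈ Ioi 0)
      have hε' : (0:ℝ) < ε := hε
      have hc : FF p / ε ≠ 0 := div_ne_zero hF (ne_of_gt hε')
      calc ‖∫ t in (0:ℝ)..x, ((t:ℂ)+1)^(KK p) * ec ((FF p / ε) * t)‖
          ≤ (2 ^ (KK p) + 1 + (KK p) * 2 ^ (KK p)) / (2 * Real.pi * |FF p / ε|) := osc_bound _ hc hx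
        _ = (2 ^ (KK p) + 1 + (KK p) * 2 ^ (KK p)) / (2 * Real.pi * |FF p|) * ε := by
            rw [abs_div, abs_of_pos hε']
            have h1 : |FF p| ≠ 0 := abs_ne_zero.mpr hF
            have h2 : ε ≠ 0 := ne_of_gt hε'
            field_simp
    · have : Tendsto (fun ε : ℝ => (2 ^ (KK p) + 1 + (KK p) * 2 ^ (KK p)) / (2 * Real.pi * |FF p|) * ε)
          (nhds 0) (nhds ((2 ^ (KK p) + 1 + (KK p) * 2 ^ (KK p)) / (2 * Real.pi * |FF p|) * 0)) :=
        (continuous_const.mul continuous_id).tendsto 0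
      simpa using this.mono_left nhdsWithin_le_nhds

/-- Partial geometric approximation of `(3.1+S)⁻¹`. -/
def Papp (N : ℕ) (S : ℝ) : ℝ := ∑ n ∈ Finset.range (N+1), (-1)^n * S^n / 3.1^(n+1)

lemma geom_id (N : ℕ) {S : ℝ} (hS : |S| ≤ 3) :
    (3.1 + S)⁻¹ - Papp N S = (-S/3.1)^(N+1) * (3.1 + S)⁻¹ := by
  obtain ⟨hS1, hS2⟩ := abs_le.mp hS
  have hD : (0:ℝ) < 3.1 + S := by norm_num; linarith
  have hD' : (3.1 + S) ≠ 0 := ne_of_gt hD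
  have hr1 : (-S/3.1 : ℝ) ≠ 1 := by
    intro hh
    rw [div_eq_one_iff_eq (by norm_num)] at hh
    norm_num at hh
    linarith
  have hg := geom_sum_eq hr1 (N+1)
  have hsum : Papp N S = (((-S/3.1)^(N+1) - 1)/((-S/3.1) - 1))/3.1 := by
    rw [← hg, Papp, Finset.sum_div]
    refine Finset.sum_congr rfl fun n _ => ?_
    rw [div_pow, pow_succ]
    ring
  rw [hsum]
  rw [show (-S/3.1 - 1 : ℝ) = -(3.1+S)/3.1 by ring, div_div,
    show (-(3.1+S)/3.1*3.1 : ℝ) = -(3.1+S) by field_simp]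
  obtain ⟨X, hX⟩ : ∃ X : ℝ, X = (-S/3.1 : ℝ)^(N+1) := ⟨_, rfl⟩
  rw [← hX]
  rw [div_neg, sub_neg_eq_add, inv_eq_one_div, ← add_div, mul_one_div]
  congr 1
  ring

lemma geom_rem (N : ℕ) {S : ℝ} (hS : |S| ≤ 3) :
    |(-S/3.1)^(N+1) * (3.1 + S)⁻¹| ≤ 10 * (30/31)^(N+1) := by
  obtain ⟨hS1, hS2⟩ := abs_le.mp hS
  have hD : (0:ℝ) < 3.1 + S := by norm_num; linarith
  rw [abs_mul, abs_pow]
  have h1 : |(-S/3.1 : ℝ)| ≤ 30/31 := by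
    rw [abs_div, abs_neg]
    rw [div_le_div_iff₀ (by norm_num) (by norm_num)]
    rw [show |(3.1:ℝ)| = 3.1 by norm_num]
    nlinarith [abs_le.mpr ⟨hS1, hS2⟩, abs_nonneg S]
  have h2 : |(3.1 + S)⁻¹| ≤ 10 := by
    rw [abs_inv, abs_of_pos hD]
    rw [inv_le_comm₀ (by positivity) (by norm_num)]
    norm_num; linarith
  calc |(-S/3.1:ℝ)|^(N+1) * |(3.1+S)⁻¹| ≤ (30/31)^(N+1) * 10 := by
        apply mul_le_mul _ h2 (abs_nonneg _) (by positivity)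
        exact pow_le_pow_left₀ (abs_nonneg _) h1 _
    _ = 10 * (30/31)^(N+1) := by ring

lemma S_abs_le {t : ℝ} (h0 : 0 ≤ t) (h1 : t ≤ 1) (y z : ℝ) :
    |(t+1) * Real.sin y + Real.sin z| ≤ 3 := by
  have := Real.neg_one_le_sin y
  have := Real.sin_le_one y
  have := Real.neg_one_le_sin z
  have := Real.sin_le_one z
  rw [abs_le]
  constructor <;> nlinarith


/-- inner mean integral (in `s₂`) of the reciprocal coefficient -/
def inn (t s₁ : ℝ) : ℝ :=
  ∫ s₂ in (0:ℝ)..1, (3.1 + (t+1) * Real.sin (2*Real.pi*s₁) + Real.sin (2*Real.pi*s₂))⁻¹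
/-- full mean of the reciprocal coefficient -/
def I2 (t : ℝ) : ℝ := ∫ s₁ in (0:ℝ)..1, inn t s₁

lemma D_lb {t : ℝ} (h0 : 0 ≤ t) (h1 : t ≤ 1) (y z : ℝ) :
    (0.1:ℝ) ≤ 3.1 + (t+1) * Real.sin y + Real.sin z := by
  have := Real.neg_one_le_sin y
  have := Real.sin_le_one y
  have := Real.neg_one_le_sin z
  have := Real.sin_le_one z
  norm_num
  nlinarith

lemma D_ub {t : ℝ} (h0 : 0 ≤ t) (h1 : t ≤ 1) (y z : ℝ) :
    3.1 + (t+1) * Real.sin y + Real.sin z ≤ (6.1:ℝ) := by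
  have := Real.neg_one_le_sin y
  have := Real.sin_le_one y
  have := Real.neg_one_le_sin z
  have := Real.sin_le_one z
  norm_num
  nlinarith

lemma D_pos {t : ℝ} (h0 : 0 ≤ t) (h1 : t ≤ 1) (y z : ℝ) :
    (0:ℝ) < 3.1 + (t+1) * Real.sin y + Real.sin z :=
  lt_of_lt_of_le (by norm_num) (D_lb h0 h1 y z)

lemma cont_uncurry_inv {t : ℝ} (h0 : 0 ≤ t) (h1 : t ≤ 1) :
    Continuous fun p : ℝ × ℝ =>
      (3.1 + (t+1) * Real.sin (2*Real.pi*p.1) + Real.sin (2*Real.pi*p.2))⁻¹ := by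
  apply Continuous.inv₀
  · continuity
  · intro p; exact ne_of_gt (D_pos h0 h1 _ _)

lemma cont_inv_s₂ {t : ℝ} (h0 : 0 ≤ t) (h1 : t ≤ 1) (s₁ : ℝ) :
    Continuous fun s₂ : ℝ =>
      (3.1 + (t+1) * Real.sin (2*Real.pi*s₁) + Real.sin (2*Real.pi*s₂))⁻¹ := by
  apply Continuous.inv₀
  · continuity
  · intro s₂; exact ne_of_gt (D_pos h0 h1 _ _)

lemma cont_inn {t : ℝ} (h0 : 0 ≤ t) (h1 : t ≤ 1) : Continuous fun s₁ => inn t s₁ := by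
  apply intervalIntegral.continuous_parametric_intervalIntegral_of_continuous
    (f := fun s₁ s₂ : ℝ => (3.1 + (t+1) * Real.sin (2*Real.pi*s₁) + Real.sin (2*Real.pi*s₂))⁻¹)
  · exact cont_uncurry_inv h0 h1
  · exact continuous_const

lemma inn_lb {t : ℝ} (h0 : 0 ≤ t) (h1 : t ≤ 1) (s₁ : ℝ) : (1/6.1 : ℝ) ≤ inn t s₁ := by
  have h : (∫ s₂ in (0:ℝ)..1, (1/6.1:ℝ)) ≤ inn t s₁ := by
    apply intervalIntegral.integral_mono_on (by norm_num)
      (intervalIntegrable_const) ((cont_inv_s₂ h0 h1 s₁).intervalIntegrable 0 1)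
    intro s₂ _
    rw [show (1/6.1:ℝ) = (6.1:ℝ)⁻¹ by norm_num]
    exact inv_anti₀ (D_pos h0 h1 _ _) (D_ub h0 h1 _ _)
  simpa using h

lemma I2_lb {t : ℝ} (h0 : 0 ≤ t) (h1 : t ≤ 1) : (1/6.1 : ℝ) ≤ I2 t := by
  have h : (∫ s₁ in (0:ℝ)..1, (1/6.1:ℝ)) ≤ I2 t := by
    apply intervalIntegral.integral_mono_on (by norm_num)
      (intervalIntegrable_const) ((cont_inn h0 h1).intervalIntegrable 0 1)
    intro s₁ _
    exact inn_lb h0 h1 s₁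
  simpa using h

lemma I2_contOn : ContinuousOn I2 (Icc (0:ℝ) 1) := by
  rw [continuousOn_iff_continuous_restrict]
  have h2 : Continuous fun q : (Icc (0:ℝ) 1 × ℝ) × ℝ =>
      (3.1 + ((q.1.1:ℝ)+1) * Real.sin (2*Real.pi*q.1.2) + Real.sin (2*Real.pi*q.2))⁻¹ := by
    apply Continuous.inv₀
    · refine (continuous_const.add (Continuous.mul ?_ (Real.continuous_sin.comp
        (continuous_const.mul (continuous_snd.comp continuous_fst))))).add
        (Real.continuous_sin.comp (continuous_const.mul continuous_snd))
      exact (continuous_subtype_val.comp (continuous_fst.comp continuous_fst)).add continuous_const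
    · intro q; exact ne_of_gt (D_pos q.1.1.2.1 q.1.1.2.2 _ _)
  have h3 : Continuous fun q : Icc (0:ℝ) 1 × ℝ => inn (q.1:ℝ) q.2 := by
    apply intervalIntegral.continuous_parametric_intervalIntegral_of_continuous
      (f := fun (q : Icc (0:ℝ) 1 × ℝ) (s₂ : ℝ) =>
        (3.1 + ((q.1:ℝ)+1) * Real.sin (2*Real.pi*q.2) + Real.sin (2*Real.pi*s₂))⁻¹)
    · exact h2
    · exact continuous_const
  exact intervalIntegral.continuous_parametric_intervalIntegral_of_continuous
    (f := fun (tp : Icc (0:ℝ) 1) (s₁ : ℝ) => inn (tp:ℝ) s₁) h3 continuous_const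


def mR (n : ℕ) (t : ℝ) : ℝ :=
  ∫ s₁ in (0:ℝ)..1, ∫ s₂ in (0:ℝ)..1,
    ((t+1) * Real.sin (2*Real.pi*s₁) + Real.sin (2*Real.pi*s₂))^n

lemma cont_m_unc (n : ℕ) (t : ℝ) : Continuous fun p : ℝ × ℝ =>
    ((t+1) * Real.sin (2*Real.pi*p.1) + Real.sin (2*Real.pi*p.2))^n := by continuity

lemma cont_msq (n : ℕ) (t s₁ : ℝ) : Continuous fun s₂ : ℝ =>
    ((t+1) * Real.sin (2*Real.pi*s₁) + Real.sin (2*Real.pi*s₂))^n := by continuity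

lemma cont_mRinner (n : ℕ) (t : ℝ) : Continuous fun s₁ =>
    ∫ s₂ in (0:ℝ)..1, ((t+1) * Real.sin (2*Real.pi*s₁) + Real.sin (2*Real.pi*s₂))^n :=
  intervalIntegral.continuous_parametric_intervalIntegral_of_continuous
    (f := fun s₁ s₂ : ℝ => ((t+1) * Real.sin (2*Real.pi*s₁) + Real.sin (2*Real.pi*s₂))^n)
    (cont_m_unc n t) continuous_const

lemma mR_ofReal (n : ℕ) (t : ℝ) : ((mR n t : ℝ) : ℂ)
    = ∫ s₁ in (0:ℝ)..1, ∫ s₂ in (0:ℝ)..1,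
        ((((t + 1) * Real.sin (2 * Real.pi * s₁) + Real.sin (2 * Real.pi * s₂) : ℝ) : ℂ))^n := by
  rw [mR]
  simp only [← Complex.ofReal_pow, intervalIntegral.integral_ofReal]

lemma mR_complex (n : ℕ) (t : ℝ) : ((mR n t : ℝ) : ℂ)
    = ∑ p : Fin n → Fin 4,
        if JJ p = 0 ∧ LL p = 0 then (∏ i, bb (p i)) * ((t:ℂ)+1)^(KK p) else 0 :=
  (mR_ofReal n t).trans (mean_inner t)

lemma mR_cont (n : ℕ) : Continuous fun t => mR n t := by
  have hC : Continuous fun t : ℝ => (∑ p : Fin n → Fin 4,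
      if JJ p = 0 ∧ LL p = 0 then (∏ i, bb (p i)) * ((t:ℂ)+1)^(KK p) else 0) := by
    apply continuous_finset_sum; intro p _
    by_cases h : JJ p = 0 ∧ LL p = 0
    · simp only [if_pos h]
      exact continuous_const.mul ((Complex.continuous_ofReal.add continuous_const).pow _)
    · simp only [if_neg h]; exact continuous_const
  have heq : (fun t => mR n t) = fun t : ℝ => (∑ p : Fin n → Fin 4,
      if JJ p = 0 ∧ LL p = 0 then (∏ i, bb (p i)) * ((t:ℂ)+1)^(KK p) else 0).re := by
    funext t
    rw [← mR_complex n t, Complex.ofReal_re]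
  rw [heq]
  exact Complex.continuous_re.comp hC

lemma main_n_real (ω₁ ω₂ x : ℝ) (hx : x ∈ Icc (0:ℝ) 1) (n : ℕ) :
    Tendsto (fun ε : ℝ => ∫ t in (0:ℝ)..x,
        ((t + 1) * Real.sin (2 * Real.pi * (ω₁ + t / ε))
          + Real.sin (2 * Real.pi * (ω₂ + Real.sqrt 2 * t / ε)))^n)
      (nhdsWithin 0 (Ioi 0)) (nhds (∫ t in (0:ℝ)..x, mR n t)) := by
  have h := main_n ω₁ ω₂ x hx n
  have e2 : (∫ t in (0:ℝ)..x, ∫ s₁ in (0:ℝ)..1, ∫ s₂ in (0:ℝ)..1,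
      ((((t + 1) * Real.sin (2 * Real.pi * s₁) + Real.sin (2 * Real.pi * s₂) : ℝ) : ℂ))^n)
      = ((∫ t in (0:ℝ)..x, mR n t : ℝ) : ℂ) := by
    rw [← intervalIntegral.integral_ofReal]
    apply intervalIntegral.integral_congr; intro t _
    exact (mR_ofReal n t).symm
  rw [e2] at h
  have h3 : Tendsto (fun ε : ℝ => ((∫ t in (0:ℝ)..x,
      ((t + 1) * Real.sin (2 * Real.pi * (ω₁ + t / ε))
        + Real.sin (2 * Real.pi * (ω₂ + Real.sqrt 2 * t / ε)))^n : ℝ) : ℂ))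
      (nhdsWithin 0 (Ioi 0)) (nhds ((∫ t in (0:ℝ)..x, mR n t : ℝ) : ℂ)) := by
    apply h.congr
    intro ε
    rw [← intervalIntegral.integral_ofReal]
    apply intervalIntegral.integral_congr; intro t _
    norm_num
  have h4 := (Complex.continuous_re.tendsto _).comp h3
  simpa [Function.comp_def] using h4


lemma cont_Papp_s₂ (N : ℕ) (t s₁ : ℝ) : Continuous fun s₂ : ℝ =>
    Papp N ((t+1) * Real.sin (2*Real.pi*s₁) + Real.sin (2*Real.pi*s₂)) := by
  apply continuous_finset_sum; intro i _
  exact (continuous_const.mul (cont_msq i t s₁)).div_const _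

lemma cont_Papp_unc (N : ℕ) (t : ℝ) : Continuous fun p : ℝ × ℝ =>
    Papp N ((t+1) * Real.sin (2*Real.pi*p.1) + Real.sin (2*Real.pi*p.2)) := by
  apply continuous_finset_sum; intro i _
  exact (continuous_const.mul (cont_m_unc i t)).div_const _

lemma cont_PappInner (N : ℕ) (t : ℝ) : Continuous fun s₁ =>
    ∫ s₂ in (0:ℝ)..1, Papp N ((t+1) * Real.sin (2*Real.pi*s₁) + Real.sin (2*Real.pi*s₂)) :=
  intervalIntegral.continuous_parametric_intervalIntegral_of_continuous
    (f := fun s₁ s₂ : ℝ => Papp N ((t+1) * Real.sin (2*Real.pi*s₁) + Real.sin (2*Real.pi*s₂)))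
    (cont_Papp_unc N t) continuous_const

lemma papp_term (i : ℕ) (S : ℝ) : (-1:ℝ)^i * S^i / 3.1^(i+1) = ((-1:ℝ)^i/3.1^(i+1)) * S^i := by
  ring

lemma mean_P (N : ℕ) (t : ℝ) :
    (∫ s₁ in (0:ℝ)..1, ∫ s₂ in (0:ℝ)..1,
        Papp N ((t+1) * Real.sin (2*Real.pi*s₁) + Real.sin (2*Real.pi*s₂)))
      = ∑ i ∈ Finset.range (N+1), ((-1:ℝ)^i/3.1^(i+1)) * mR i t := by
  have inner : ∀ s₁ : ℝ, (∫ s₂ in (0:ℝ)..1,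
      Papp N ((t+1) * Real.sin (2*Real.pi*s₁) + Real.sin (2*Real.pi*s₂)))
      = ∑ i ∈ Finset.range (N+1), ((-1:ℝ)^i/3.1^(i+1))
          * ∫ s₂ in (0:ℝ)..1, ((t+1) * Real.sin (2*Real.pi*s₁) + Real.sin (2*Real.pi*s₂))^i := by
    intro s₁
    simp only [Papp, papp_term]
    rw [intervalIntegral.integral_finset_sum
      (fun i _ => by apply Continuous.intervalIntegrable; exact (continuous_const.mul (cont_msq i t s₁)))]
    exact Finset.sum_congr rfl fun i _ => intervalIntegral.integral_const_mul _ _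
  simp only [inner]
  rw [intervalIntegral.integral_finset_sum
    (fun i _ => by apply Continuous.intervalIntegrable; exact (continuous_const.mul (cont_mRinner i t)))]
  refine Finset.sum_congr rfl fun i _ => ?_
  rw [intervalIntegral.integral_const_mul, mR]

lemma mean_close (N : ℕ) {t : ℝ} (h0 : 0 ≤ t) (h1 : t ≤ 1) :
    |I2 t - ∑ i ∈ Finset.range (N+1), ((-1:ℝ)^i/3.1^(i+1)) * mR i t| ≤ 10*(30/31)^(N+1) := by
  rw [← mean_P N t, I2]
  rw [← intervalIntegral.integral_sub ((cont_inn h0 h1).intervalIntegrable 0 1)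
    ((cont_PappInner N t).intervalIntegrable 0 1)]
  have hb : ∀ s₁ ∈ Set.uIoc (0:ℝ) 1, ‖inn t s₁ - ∫ s₂ in (0:ℝ)..1,
      Papp N ((t+1) * Real.sin (2*Real.pi*s₁) + Real.sin (2*Real.pi*s₂))‖ ≤ 10*(30/31)^(N+1) := by
    intro s₁ _
    rw [inn, ← intervalIntegral.integral_sub ((cont_inv_s₂ h0 h1 s₁).intervalIntegrable 0 1)
      ((cont_Papp_s₂ N t s₁).intervalIntegrable 0 1)]
    have hb2 : ∀ s₂ ∈ Set.uIoc (0:ℝ) 1,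
        ‖(3.1 + (t+1) * Real.sin (2*Real.pi*s₁) + Real.sin (2*Real.pi*s₂))⁻¹
          - Papp N ((t+1) * Real.sin (2*Real.pi*s₁) + Real.sin (2*Real.pi*s₂))‖
          ≤ 10*(30/31)^(N+1) := by
      intro s₂ _
      rw [Real.norm_eq_abs,
        show (3.1 + (t+1) * Real.sin (2*Real.pi*s₁) + Real.sin (2*Real.pi*s₂))
          = 3.1 + ((t+1) * Real.sin (2*Real.pi*s₁) + Real.sin (2*Real.pi*s₂)) from by ring,
        geom_id N (S_abs_le h0 h1 _ _)]
      exact geom_rem N (S_abs_le h0 h1 _ _)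
    have := intervalIntegral.norm_integral_le_of_norm_le_const hb2
    simpa using this
  have := intervalIntegral.norm_integral_le_of_norm_le_const hb
  simpa using this

lemma cont_osc (ω₁ ω₂ ε : ℝ) (i : ℕ) : Continuous fun t : ℝ =>
    ((t + 1) * Real.sin (2 * Real.pi * (ω₁ + t / ε))
      + Real.sin (2 * Real.pi * (ω₂ + Real.sqrt 2 * t / ε)))^i := by
  apply Continuous.pow
  apply Continuous.add
  · exact (continuous_id.add continuous_const).mul (Real.continuous_sin.comp
      (continuous_const.mul (continuous_const.add (continuous_id.div_const ε))))
  · exact Real.continuous_sin.comp (continuous_const.mul (continuous_const.add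
      ((continuous_const.mul continuous_id).div_const ε)))

lemma cont_Papp_osc (ω₁ ω₂ ε : ℝ) (N : ℕ) : Continuous fun t : ℝ =>
    Papp N ((t + 1) * Real.sin (2 * Real.pi * (ω₁ + t / ε))
      + Real.sin (2 * Real.pi * (ω₂ + Real.sqrt 2 * t / ε))) := by
  apply continuous_finset_sum; intro i _
  exact (continuous_const.mul (cont_osc ω₁ ω₂ ε i)).div_const _

lemma intgr_inv_osc (ω₁ ω₂ ε x : ℝ) (hx : x ∈ Icc (0:ℝ) 1) : IntervalIntegrable (fun t : ℝ =>
    (3.1 + (t + 1) * Real.sin (2 * Real.pi * (ω₁ + t / ε))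
      + Real.sin (2 * Real.pi * (ω₂ + Real.sqrt 2 * t / ε)))⁻¹) volume 0 x := by
  apply ContinuousOn.intervalIntegrable
  apply ContinuousOn.inv₀
  · have hc : Continuous fun t : ℝ => 3.1 + (t + 1) * Real.sin (2 * Real.pi * (ω₁ + t / ε))
        + Real.sin (2 * Real.pi * (ω₂ + Real.sqrt 2 * t / ε)) := by
      apply Continuous.add
      apply Continuous.add continuous_const
      · exact (continuous_id.add continuous_const).mul (Real.continuous_sin.comp
          (continuous_const.mul (continuous_const.add (continuous_id.div_const ε))))
      · exact Real.continuous_sin.comp (continuous_const.mul (continuous_const.add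
          ((continuous_const.mul continuous_id).div_const ε)))
    exact hc.continuousOn
  · intro t ht
    rw [uIcc_of_le hx.1] at ht
    exact ne_of_gt (D_pos ht.1 (le_trans ht.2 hx.2) _ _)

lemma osc_P (ω₁ ω₂ x ε : ℝ) (N : ℕ) :
    (∫ t in (0:ℝ)..x, Papp N ((t + 1) * Real.sin (2 * Real.pi * (ω₁ + t / ε))
        + Real.sin (2 * Real.pi * (ω₂ + Real.sqrt 2 * t / ε))))
    = ∑ i ∈ Finset.range (N+1), ((-1:ℝ)^i/3.1^(i+1))
        * ∫ t in (0:ℝ)..x, ((t + 1) * Real.sin (2 * Real.pi * (ω₁ + t / ε))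
            + Real.sin (2 * Real.pi * (ω₂ + Real.sqrt 2 * t / ε)))^i := by
  simp only [Papp, papp_term]
  rw [intervalIntegral.integral_finset_sum
    (fun i _ => by apply Continuous.intervalIntegrable; exact (continuous_const.mul (cont_osc ω₁ ω₂ ε i)))]
  exact Finset.sum_congr rfl fun i _ => intervalIntegral.integral_const_mul _ _

lemma osc_close (ω₁ ω₂ ε : ℝ) {x : ℝ} (hx : x ∈ Icc (0:ℝ) 1) (N : ℕ) :
    |(∫ t in (0:ℝ)..x, (3.1 + (t + 1) * Real.sin (2 * Real.pi * (ω₁ + t / ε))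
        + Real.sin (2 * Real.pi * (ω₂ + Real.sqrt 2 * t / ε)))⁻¹)
      - ∫ t in (0:ℝ)..x, Papp N ((t + 1) * Real.sin (2 * Real.pi * (ω₁ + t / ε))
        + Real.sin (2 * Real.pi * (ω₂ + Real.sqrt 2 * t / ε)))| ≤ 10*(30/31)^(N+1) := by
  rw [← intervalIntegral.integral_sub (intgr_inv_osc ω₁ ω₂ ε x hx)
    ((cont_Papp_osc ω₁ ω₂ ε N).intervalIntegrable 0 x)]
  have hb : ∀ t ∈ Set.uIoc (0:ℝ) x,
      ‖(3.1 + (t + 1) * Real.sin (2 * Real.pi * (ω₁ + t / ε))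
          + Real.sin (2 * Real.pi * (ω₂ + Real.sqrt 2 * t / ε)))⁻¹
        - Papp N ((t + 1) * Real.sin (2 * Real.pi * (ω₁ + t / ε))
          + Real.sin (2 * Real.pi * (ω₂ + Real.sqrt 2 * t / ε)))‖ ≤ 10*(30/31)^(N+1) := by
    intro t ht
    rw [uIoc_of_le hx.1] at ht
    have h0 : 0 ≤ t := le_of_lt ht.1
    have h1 : t ≤ 1 := le_trans ht.2 hx.2
    rw [Real.norm_eq_abs,
      show (3.1 + (t + 1) * Real.sin (2 * Real.pi * (ω₁ + t / ε))
          + Real.sin (2 * Real.pi * (ω₂ + Real.sqrt 2 * t / ε)))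
        = 3.1 + ((t + 1) * Real.sin (2 * Real.pi * (ω₁ + t / ε))
          + Real.sin (2 * Real.pi * (ω₂ + Real.sqrt 2 * t / ε))) from by ring,
      geom_id N (S_abs_le h0 h1 _ _)]
    exact geom_rem N (S_abs_le h0 h1 _ _)
  have h := intervalIntegral.norm_integral_le_of_norm_le_const hb
  calc |_| ≤ 10*(30/31)^(N+1) * |x - 0| := h
    _ ≤ 10*(30/31)^(N+1) * 1 := by
        apply mul_le_mul_of_nonneg_left _ (by positivity)
        rw [sub_zero, abs_of_nonneg hx.1]; exact hx.2
    _ = 10*(30/31)^(N+1) := mul_one _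

theorem stmt_16' (Astar : ℝ → ℝ)
    (hA : ∀ t, Astar t =
      (∫ s₁ in (0:ℝ)..1, ∫ s₂ in (0:ℝ)..1,
        (3.1 + (t + 1) * Real.sin (2 * Real.pi * s₁) + Real.sin (2 * Real.pi * s₂))⁻¹)⁻¹) :
    ∀ ω₁ ∈ Icc (0:ℝ) 1, ∀ ω₂ ∈ Icc (0:ℝ) 1, ∀ x ∈ Icc (0:ℝ) 1,
      Tendsto
        (fun ε => ∫ t in (0:ℝ)..x,
          (3.1 + (t + 1) * Real.sin (2 * Real.pi * (ω₁ + t / ε)) +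
            Real.sin (2 * Real.pi * (ω₂ + Real.sqrt 2 * t / ε)))⁻¹)
        (nhdsWithin 0 (Ioi 0))
        (nhds (∫ t in (0:ℝ)..x, 1 / Astar t)) := by
  intro ω₁ hω₁ ω₂ hω₂ x hx
  have hRHS : (∫ t in (0:ℝ)..x, 1 / Astar t) = ∫ t in (0:ℝ)..x, I2 t := by
    apply intervalIntegral.integral_congr
    intro t _
    show 1 / Astar t = I2 t
    rw [hA t, one_div, inv_inv]
    rfl
  rw [hRHS, Metric.tendsto_nhds]
  intro δ hδ
  obtain ⟨N, hN⟩ := exists_pow_lt_of_lt_one (show (0:ℝ) < δ/30 by linarith)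
    (show (30/31:ℝ) < 1 by norm_num)
  have hq : 10*(30/31:ℝ)^(N+1) < δ/3 := by
    have h1 : (30/31:ℝ)^(N+1) ≤ (30/31)^N :=
      pow_le_pow_of_le_one (by norm_num) (by norm_num) (Nat.le_succ N)
    calc 10*(30/31:ℝ)^(N+1) ≤ 10*(30/31)^N := by linarith
      _ < 10*(δ/30) := by linarith
      _ = δ/3 := by ring
  have hPQ : Tendsto (fun ε : ℝ => ∑ i ∈ Finset.range (N+1), ((-1:ℝ)^i/3.1^(i+1))
        * ∫ t in (0:ℝ)..x, ((t + 1) * Real.sin (2 * Real.pi * (ω₁ + t / ε))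
            + Real.sin (2 * Real.pi * (ω₂ + Real.sqrt 2 * t / ε)))^i)
      (nhdsWithin 0 (Ioi 0))
      (nhds (∑ i ∈ Finset.range (N+1), ((-1:ℝ)^i/3.1^(i+1)) * ∫ t in (0:ℝ)..x, mR i t)) :=
    tendsto_finset_sum _ fun i _ => (main_n_real ω₁ ω₂ x hx i).const_mul _
  have hQR : |(∫ t in (0:ℝ)..x, I2 t)
      - ∑ i ∈ Finset.range (N+1), ((-1:ℝ)^i/3.1^(i+1)) * ∫ t in (0:ℝ)..x, mR i t|
      ≤ 10*(30/31)^(N+1) := by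
    have hsum : (∑ i ∈ Finset.range (N+1), ((-1:ℝ)^i/3.1^(i+1)) * ∫ t in (0:ℝ)..x, mR i t)
        = ∫ t in (0:ℝ)..x, ∑ i ∈ Finset.range (N+1), ((-1:ℝ)^i/3.1^(i+1)) * mR i t := by
      rw [intervalIntegral.integral_finset_sum
        (fun i _ => by apply Continuous.intervalIntegrable; exact (continuous_const.mul (mR_cont i)))]
      exact Finset.sum_congr rfl fun i _ => (intervalIntegral.integral_const_mul _ _).symm
    have hI2int : IntervalIntegrable I2 volume 0 x := by
      apply ContinuousOn.intervalIntegrable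
      apply I2_contOn.mono
      rw [uIcc_of_le hx.1]
      exact Icc_subset_Icc le_rfl hx.2
    have hSumInt : IntervalIntegrable
        (fun t => ∑ i ∈ Finset.range (N+1), ((-1:ℝ)^i/3.1^(i+1)) * mR i t) volume 0 x := by
      apply Continuous.intervalIntegrable
      exact continuous_finset_sum _ fun i _ => continuous_const.mul (mR_cont i)
    rw [hsum, ← intervalIntegral.integral_sub hI2int hSumInt]
    have hb : ∀ t ∈ Set.uIoc (0:ℝ) x,
        ‖I2 t - ∑ i ∈ Finset.range (N+1), ((-1:ℝ)^i/3.1^(i+1)) * mR i t‖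
          ≤ 10*(30/31)^(N+1) := by
      intro t ht
      rw [uIoc_of_le hx.1] at ht
      rw [Real.norm_eq_abs]
      exact mean_close N (le_of_lt ht.1) (le_trans ht.2 hx.2)
    have h := intervalIntegral.norm_integral_le_of_norm_le_const hb
    calc |_| ≤ 10*(30/31)^(N+1) * |x - 0| := h
      _ ≤ 10*(30/31)^(N+1) * 1 := by
          apply mul_le_mul_of_nonneg_left _ (by positivity)
          rw [sub_zero, abs_of_nonneg hx.1]; exact hx.2
      _ = 10*(30/31)^(N+1) := mul_one _
  have hev := Metric.tendsto_nhds.mp hPQ (δ/3) (by linarith)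
  filter_upwards [hev] with ε hεP
  have hLP := osc_close ω₁ ω₂ ε hx N
  rw [osc_P ω₁ ω₂ x ε N] at hLP
  set Lv := (∫ t in (0:ℝ)..x, (3.1 + (t + 1) * Real.sin (2 * Real.pi * (ω₁ + t / ε)) +
      Real.sin (2 * Real.pi * (ω₂ + Real.sqrt 2 * t / ε)))⁻¹) with hLv
  set Pv := (∑ i ∈ Finset.range (N+1), ((-1:ℝ)^i/3.1^(i+1))
      * ∫ t in (0:ℝ)..x, ((t + 1) * Real.sin (2 * Real.pi * (ω₁ + t / ε))
          + Real.sin (2 * Real.pi * (ω₂ + Real.sqrt 2 * t / ε)))^i) with hPv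
  set Qv := (∑ i ∈ Finset.range (N+1), ((-1:ℝ)^i/3.1^(i+1)) * ∫ t in (0:ℝ)..x, mR i t) with hQv
  set Rv := (∫ t in (0:ℝ)..x, I2 t) with hRv
  rw [Real.dist_eq] at hεP ⊢
  have htri : |Lv - Rv| ≤ |Lv - Pv| + (|Pv - Qv| + |Qv - Rv|) := by
    calc |Lv - Rv| ≤ |Lv - Pv| + |Pv - Rv| := abs_sub_le _ _ _
      _ ≤ |Lv - Pv| + (|Pv - Qv| + |Qv - Rv|) := by linarith [abs_sub_le Pv Qv Rv]
  have hflip : |Qv - Rv| = |Rv - Qv| := abs_sub_comm _ _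
  linarith


end Stmt16
end

open MeasureTheory Set Filter

/-- The G-limit of the ergodic random coefficient
`A^ε(x,ω) = 3.1 + (x+1) sin(2π(ω₁ + x/ε)) + sin(2π(ω₂ + √2 x/ε))` is the deterministic
function `A*(x) = 1/E[1/A(x,·)]`, independently of the realization `ω`:
the reciprocals converge weakly (over every interval `[0,x]`) to `1/A*`. -/
theorem stmt_16 (Astar : ℝ → ℝ)
    (hA : ∀ t, Astar t =
      (∫ s₁ in (0:ℝ)..1, ∫ s₂ in (0:ℝ)..1,
        (3.1 + (t + 1) * Real.sin (2 * Real.pi * s₁) + Real.sin (2 * Real.pi * s₂))⁻¹)⁻¹) :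
    ∀ ω₁ ∈ Icc (0:ℝ) 1, ∀ ω₂ ∈ Icc (0:ℝ) 1, ∀ x ∈ Icc (0:ℝ) 1,
      Tendsto
        (fun ε => ∫ t in (0:ℝ)..x,
          (3.1 + (t + 1) * Real.sin (2 * Real.pi * (ω₁ + t / ε)) +
            Real.sin (2 * Real.pi * (ω₂ + Real.sqrt 2 * t / ε)))⁻¹)
        (nhdsWithin 0 (Ioi 0))
        (nhds (∫ t in (0:ℝ)..x, 1 / Astar t)) :=
  Stmt16.stmt_16' Astar hA
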